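/- Let v_s be exponentially distributed with rate s > 0 and v_b exponentially distributed with rate b > 0, independent. Then for every p ≥ 0, E[W_p] = e^{−bp}·((1 − e^{−sp})·(p + 1/b) + e^{−sp}·(p + 1/s)) + (1 − e^{−bp})·(1/s), and E[max(v_s, v_b)] = 1/s + 1/b − 1/(s+b). -/

import Mathlib

open MeasureTheory ProbabilityTheory Real

open Set Filter Topology
open scoped ENNReal NNReal

namespace ExpAux

lemma tendsto_exp_neg {r : ℝ} (hr : 0 < r) :
    Tendsto (fun x : ℝ => exp (-(r * x))) atTop (𝓝 0) := by
  have h2 : Tendsto (fun x : ℝ => -(r * x)) atTop atBot :=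
    tendsto_neg_atTop_atBot.comp (Tendsto.const_mul_atTop hr tendsto_id)
  exact Real.tendsto_exp_atBot.comp h2

lemma tendsto_mul_exp_neg {r : ℝ} (hr : 0 < r) :
    Tendsto (fun x : ℝ => x * exp (-(r * x))) atTop (𝓝 0) := by
  have h1 : Tendsto (fun y : ℝ => y ^ 1 * exp (-y)) atTop (𝓝 0) :=
    Real.tendsto_pow_mul_exp_neg_atTop_nhds_zero 1
  have h2 : Tendsto (fun x : ℝ => r * x) atTop atTop :=
    Tendsto.const_mul_atTop hr tendsto_id
  have h3 : Tendsto (fun x : ℝ => (r * x) * exp (-(r * x))) atTop (𝓝 0) := by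
    simpa [Function.comp_def] using h1.comp h2
  have h4 := h3.const_mul (1 / r)
  rw [mul_zero] at h4
  refine h4.congr fun x => ?_
  field_simp

lemma integrableOn_tail {r : ℝ} (hr : 0 < r) (c : ℝ) :
    IntegrableOn (fun x => r * exp (-(r * x))) (Ioi c) := by
  simpa [neg_mul, IntegrableOn] using (exp_neg_integrableOn_Ioi c hr).const_mul r

lemma integral_tail {r : ℝ} (hr : 0 < r) (c : ℝ) :
    ∫ x in Ioi c, r * exp (-(r * x)) = exp (-(r * c)) := by
  have h := integral_Ioi_of_hasDerivAt_of_tendsto' (f := fun a : ℝ => -exp (-(r * a)))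
    (f' := fun x => r * exp (-(r * x))) (fun x _ => hasDerivAt_neg_exp_mul_exp)
    (integrableOn_tail hr c) (by simpa using (tendsto_exp_neg hr).neg)
  simpa using h

lemma hasDerivAt_moment {r : ℝ} (hr : 0 < r) (x : ℝ) :
    HasDerivAt (fun a : ℝ => -((a + 1 / r) * exp (-(r * a)))) (x * (r * exp (-(r * x)))) x := by
  have h1 : HasDerivAt (fun a : ℝ => a + 1 / r) 1 x := (hasDerivAt_id x).add_const _
  have h2 : HasDerivAt (fun a : ℝ => -(r * a)) (-r) x := by
    simpa [mul_comm, Pi.neg_def] using ((hasDerivAt_id x).const_mul r).neg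
  have h4 : HasDerivAt (fun a : ℝ => -((a + 1 / r) * exp (-(r * a)))) _ x := (h1.mul h2.exp).neg
  convert h4 using 1
  field_simp
  ring

lemma tendsto_moment {r : ℝ} (hr : 0 < r) :
    Tendsto (fun a : ℝ => -((a + 1 / r) * exp (-(r * a)))) atTop (𝓝 0) := by
  have h := ((tendsto_mul_exp_neg hr).add ((tendsto_exp_neg hr).const_mul (1 / r))).neg
  norm_num at h
  exact h.congr fun x => by ring

lemma integrableOn_moment {r : ℝ} (hr : 0 < r) {c : ℝ} (hc : 0 ≤ c) :
    IntegrableOn (fun x => x * (r * exp (-(r * x)))) (Ioi c) :=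
  integrableOn_Ioi_deriv_of_nonneg' (fun x _ => hasDerivAt_moment hr x)
    (fun x hx => mul_nonneg (hc.trans hx.out.le) (by positivity)) (tendsto_moment hr)

lemma integral_moment {r : ℝ} (hr : 0 < r) {c : ℝ} (hc : 0 ≤ c) :
    ∫ x in Ioi c, x * (r * exp (-(r * x))) = exp (-(r * c)) * (c + 1 / r) := by
  have h := integral_Ioi_of_hasDerivAt_of_nonneg' (fun x _ => hasDerivAt_moment hr x)
    (fun x hx => mul_nonneg (hc.trans hx.out.le) (by positivity)) (tendsto_moment hr)
  rw [h]; ring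

lemma integral_expMeasure {r : ℝ} (hr : 0 < r) (f : ℝ → ℝ) :
    ∫ x, f x ∂(expMeasure r) = ∫ x in Ioi 0, f x * (r * exp (-(r * x))) := by
  have hd : expMeasure r
      = volume.withDensity (fun x => ((exponentialPDFReal r x).toNNReal : ℝ≥0∞)) := rfl
  rw [hd, integral_withDensity_eq_integral_smul (measurable_exponentialPDFReal r).real_toNNReal f]
  have h1 : (fun x => ((exponentialPDFReal r x).toNNReal : ℝ≥0) • f x)
      = fun x => exponentialPDFReal r x * f x := by
    funext x
    rw [NNReal.smul_def, Real.coe_toNNReal _ (exponentialPDFReal_nonneg hr x), smul_eq_mul]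
  rw [h1]
  rw [← setIntegral_eq_integral_of_forall_compl_eq_zero
    (s := Ici (0:ℝ)) (fun x hx => by
      simp [exponentialPDFReal, gammaPDFReal, (by simpa using hx : ¬ (0:ℝ) ≤ x)])]
  rw [integral_Ici_eq_integral_Ioi]
  refine setIntegral_congr_fun measurableSet_Ioi fun x hx => ?_
  simp only [exponentialPDFReal, gammaPDFReal, if_pos hx.out.le, rpow_one, Real.Gamma_one,
    div_one, sub_self, rpow_zero, mul_one]
  ring


lemma ae_ne (p : ℝ) : ∀ᵐ x : ℝ, x ≠ p := by
  simp only [ae_iff, not_not, Set.setOf_eq_eq_singleton]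
  exact measure_singleton p

lemma split_Ioi {p : ℝ} (hp : 0 ≤ p) {f : ℝ → ℝ} (hf : IntegrableOn f (Ioi 0)) :
    ∫ x in Ioi (0:ℝ), f x = (∫ x in Ioc 0 p, f x) + ∫ x in Ioi p, f x := by
  rw [← Ioc_union_Ioi_eq_Ioi hp]
  exact setIntegral_union (Set.disjoint_left.mpr fun x hx hx' => absurd hx' (not_lt.mpr hx.2))
    measurableSet_Ioi (hf.mono_set Ioc_subset_Ioi_self) (hf.mono_set (Ioi_subset_Ioi hp))

lemma dens_nonneg {r : ℝ} (hr : 0 < r) (x : ℝ) : 0 ≤ r * exp (-(r * x)) := by positivity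

lemma meas_dens (r : ℝ) : Measurable fun x : ℝ => r * exp (-(r * x)) := by fun_prop

lemma P1 {r p : ℝ} (hr : 0 < r) (hp : 0 ≤ p) :
    ∫ x, (if x ≤ p then (1:ℝ) else 0) ∂expMeasure r = 1 - exp (-(r * p)) := by
  rw [integral_expMeasure hr]
  have hInt : IntegrableOn (fun x => (if x ≤ p then (1:ℝ) else 0) * (r * exp (-(r * x))))
      (Ioi 0) := by
    refine (integrableOn_tail hr 0).mono'
      (((Measurable.ite (measurableSet_le measurable_id measurable_const) measurable_const
        measurable_const).mul (meas_dens r)).aestronglyMeasurable) (ae_of_all _ fun x => ?_)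
    rw [norm_mul]
    by_cases h : x ≤ p <;>
      simp [h, abs_of_pos hr, abs_of_pos (Real.exp_pos _), dens_nonneg hr x]
  rw [split_Ioi hp hInt,
    setIntegral_congr_fun measurableSet_Ioc
      (fun x hx => by rw [if_pos hx.2, one_mul] : EqOn _ (fun x => r * exp (-(r * x))) _),
    setIntegral_congr_fun measurableSet_Ioi
      (fun x hx => by rw [if_neg (not_le.mpr hx.out), zero_mul] : EqOn _ (fun _ => (0:ℝ)) _),
    integral_zero, add_zero]
  have h0 := split_Ioi hp (integrableOn_tail hr 0)
  rw [integral_tail hr 0, integral_tail hr p] at h0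
  simp only [mul_zero, neg_zero, Real.exp_zero] at h0
  linarith

lemma P2 {r p : ℝ} (hr : 0 < r) (hp : 0 ≤ p) :
    ∫ x, (if x ≤ p then x else 0) ∂expMeasure r = 1 / r - exp (-(r * p)) * (p + 1 / r) := by
  rw [integral_expMeasure hr]
  have hInt : IntegrableOn (fun x => (if x ≤ p then x else 0) * (r * exp (-(r * x))))
      (Ioi 0) := by
    refine (integrableOn_moment hr le_rfl).mono'
      (((Measurable.ite (measurableSet_le measurable_id measurable_const) measurable_id
        measurable_const).mul (meas_dens r)).aestronglyMeasurable)
      ((ae_restrict_iff' measurableSet_Ioi).mpr (ae_of_all _ fun x hx => ?_))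
    rw [norm_mul]
    have h1 : ‖if x ≤ p then x else 0‖ ≤ x := by
      by_cases h : x ≤ p <;> simp [h, abs_of_nonneg hx.out.le, hx.out.le]
    calc ‖if x ≤ p then x else 0‖ * ‖r * exp (-(r * x))‖
        ≤ x * ‖r * exp (-(r * x))‖ := by
          exact mul_le_mul_of_nonneg_right h1 (norm_nonneg _)
      _ = x * (r * exp (-(r * x))) := by rw [Real.norm_eq_abs, abs_of_nonneg (dens_nonneg hr x)]
  rw [split_Ioi hp hInt,
    setIntegral_congr_fun measurableSet_Ioc
      (fun x hx => by rw [if_pos hx.2] : EqOn _ (fun x => x * (r * exp (-(r * x)))) _),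
    setIntegral_congr_fun measurableSet_Ioi
      (fun x hx => by rw [if_neg (not_le.mpr hx.out), zero_mul] : EqOn _ (fun _ => (0:ℝ)) _),
    integral_zero, add_zero]
  have h0 := split_Ioi hp (integrableOn_moment hr le_rfl)
  rw [integral_moment hr le_rfl, integral_moment hr hp] at h0
  simp only [mul_zero, neg_zero, Real.exp_zero, zero_add, one_mul] at h0
  linarith

lemma P3 {r p : ℝ} (hr : 0 < r) (hp : 0 ≤ p) :
    ∫ x, (if p ≤ x then (1:ℝ) else 0) ∂expMeasure r = exp (-(r * p)) := by
  rw [integral_expMeasure hr]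
  have hInt : IntegrableOn (fun x => (if p ≤ x then (1:ℝ) else 0) * (r * exp (-(r * x))))
      (Ioi 0) := by
    refine (integrableOn_tail hr 0).mono'
      (((Measurable.ite (measurableSet_le measurable_const measurable_id) measurable_const
        measurable_const).mul (meas_dens r)).aestronglyMeasurable) (ae_of_all _ fun x => ?_)
    rw [norm_mul]
    by_cases h : p ≤ x <;>
      simp [h, abs_of_pos hr, abs_of_pos (Real.exp_pos _), dens_nonneg hr x]
  rw [split_Ioi hp hInt]
  have hIoc : ∫ x in Ioc 0 p, (if p ≤ x then (1:ℝ) else 0) * (r * exp (-(r * x))) = 0 := by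
    rw [setIntegral_congr_ae measurableSet_Ioc
      (by filter_upwards [ae_ne p] with x hxp hx
          rw [if_neg (not_le.mpr (lt_of_le_of_ne hx.2 hxp)), zero_mul] :
        ∀ᵐ x ∂volume, x ∈ Ioc 0 p → _ = (fun _ => (0:ℝ)) x), integral_zero]
  rw [hIoc, zero_add,
    setIntegral_congr_fun measurableSet_Ioi
      (fun x hx => by rw [if_pos hx.out.le, one_mul] : EqOn _ (fun x => r * exp (-(r * x))) _),
    integral_tail hr p]

lemma P4 {r p : ℝ} (hr : 0 < r) (hp : 0 ≤ p) :
    ∫ x, (if p ≤ x then x else 0) ∂expMeasure r = exp (-(r * p)) * (p + 1 / r) := by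
  rw [integral_expMeasure hr]
  have hInt : IntegrableOn (fun x => (if p ≤ x then x else 0) * (r * exp (-(r * x))))
      (Ioi 0) := by
    refine (integrableOn_moment hr le_rfl).mono'
      (((Measurable.ite (measurableSet_le measurable_const measurable_id) measurable_id
        measurable_const).mul (meas_dens r)).aestronglyMeasurable)
      ((ae_restrict_iff' measurableSet_Ioi).mpr (ae_of_all _ fun x hx => ?_))
    rw [norm_mul]
    have h1 : ‖if p ≤ x then x else 0‖ ≤ x := by
      by_cases h : p ≤ x <;> simp [h, abs_of_nonneg hx.out.le, hx.out.le]
    calc ‖if p ≤ x then x else 0‖ * ‖r * exp (-(r * x))‖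
        ≤ x * ‖r * exp (-(r * x))‖ := mul_le_mul_of_nonneg_right h1 (norm_nonneg _)
      _ = x * (r * exp (-(r * x))) := by rw [Real.norm_eq_abs, abs_of_nonneg (dens_nonneg hr x)]
  rw [split_Ioi hp hInt]
  have hIoc : ∫ x in Ioc 0 p, (if p ≤ x then x else 0) * (r * exp (-(r * x))) = 0 := by
    rw [setIntegral_congr_ae measurableSet_Ioc
      (by filter_upwards [ae_ne p] with x hxp hx
          rw [if_neg (not_le.mpr (lt_of_le_of_ne hx.2 hxp)), zero_mul] :
        ∀ᵐ x ∂volume, x ∈ Ioc 0 p → _ = (fun _ => (0:ℝ)) x), integral_zero]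
  rw [hIoc, zero_add,
    setIntegral_congr_fun measurableSet_Ioi
      (fun x hx => by rw [if_pos hx.out.le] : EqOn _ (fun x => x * (r * exp (-(r * x)))) _),
    integral_moment hr hp]

lemma P5 {r : ℝ} (hr : 0 < r) : ∫ x, x ∂expMeasure r = 1 / r := by
  rw [integral_expMeasure hr, integral_moment hr le_rfl]
  simp


lemma integral_max {b : ℝ} (hb : 0 < b) {x : ℝ} (hx : 0 < x) :
    ∫ y, max x y ∂expMeasure b = x + exp (-(b * x)) / b := by
  rw [integral_expMeasure hb]
  have key : ∀ y : ℝ, max x y * (b * exp (-(b * y)))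
      = x * (b * exp (-(b * y))) + max (y - x) 0 * (b * exp (-(b * y))) := by
    intro y
    rcases le_total y x with h | h
    · rw [max_eq_left h, max_eq_right (sub_nonpos.mpr h)]; ring
    · rw [max_eq_right h, max_eq_left (sub_nonneg.mpr h)]; ring
  simp_rw [key]
  have hA : IntegrableOn (fun y => x * (b * exp (-(b * y)))) (Ioi 0) :=
    (integrableOn_tail hb 0).const_mul x
  have hB : IntegrableOn (fun y => max (y - x) 0 * (b * exp (-(b * y)))) (Ioi 0) := by
    refine (integrableOn_moment hb le_rfl).mono'
      ((((measurable_id.sub measurable_const).max measurable_const).mul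
        (meas_dens b)).aestronglyMeasurable)
      ((ae_restrict_iff' measurableSet_Ioi).mpr (ae_of_all _ fun y hy => ?_))
    rw [norm_mul]
    have h1 : ‖max (y - x) 0‖ ≤ y := by
      rw [Real.norm_eq_abs, abs_of_nonneg (le_max_right _ _)]
      exact max_le (by linarith [hy.out, hx.le]) hy.out.le
    calc ‖max (y - x) 0‖ * ‖b * exp (-(b * y))‖
        ≤ y * ‖b * exp (-(b * y))‖ := mul_le_mul_of_nonneg_right h1 (norm_nonneg _)
      _ = y * (b * exp (-(b * y))) := by rw [Real.norm_eq_abs, abs_of_nonneg (dens_nonneg hb y)]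
  rw [integral_add hA hB, integral_const_mul, integral_tail hb 0]
  have h2 : ∫ y in Ioi (0:ℝ), max (y - x) 0 * (b * exp (-(b * y))) = exp (-(b * x)) / b := by
    rw [split_Ioi hx.le hB,
      setIntegral_congr_fun measurableSet_Ioc
        (fun y hy => by rw [max_eq_right (sub_nonpos.mpr hy.2), zero_mul] :
          EqOn _ (fun _ => (0:ℝ)) _),
      integral_zero, zero_add,
      setIntegral_congr_fun measurableSet_Ioi
        (fun y hy => by rw [max_eq_left (sub_nonneg.mpr hy.out.le)] :
          EqOn _ (fun y => (y - x) * (b * exp (-(b * y)))) _)]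
    have h3 : ∀ y : ℝ, (y - x) * (b * exp (-(b * y)))
        = y * (b * exp (-(b * y))) - x * (b * exp (-(b * y))) := fun y => by ring
    simp_rw [h3]
    rw [integral_sub (integrableOn_moment hb hx.le) ((integrableOn_tail hb x).const_mul x),
      integral_const_mul, integral_moment hb hx.le, integral_tail hb x]
    field_simp
    ring
  rw [h2]
  simp

end ExpAux


open ExpAux Set

/-- With the seller's value exponentially distributed with rate `s > 0` and the
buyer's value exponentially distributed with rate `b > 0` (independent), the expected
welfare of the fixed-price mechanism at any price `p ≥ 0` is
`e^{-bp}·((1 - e^{-sp})·(p + 1/b) + e^{-sp}·(p + 1/s)) + (1 - e^{-bp})·(1/s)`,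
and the optimal expected welfare is `1/s + 1/b - 1/(s + b)`. -/
theorem exponential_welfare_formulas
    {Ω : Type*} [MeasurableSpace Ω] (μ : Measure Ω) [IsProbabilityMeasure μ]
    (vs vb : Ω → ℝ) (s b : ℝ) (hs : 0 < s) (hb : 0 < b)
    (hmeas_s : Measurable vs) (hmeas_b : Measurable vb)
    (hindep : IndepFun vs vb μ)
    (hs_nonneg : ∀ ω, 0 ≤ vs ω) (hb_nonneg : ∀ ω, 0 ≤ vb ω)
    (hs_int : Integrable vs μ) (hb_int : Integrable vb μ)
    (hs_dist : μ.map vs = expMeasure s)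
    (hb_dist : μ.map vb = expMeasure b) :
    (∀ p : ℝ, 0 ≤ p →
      ∫ ω, (if vs ω ≤ p ∧ p ≤ vb ω then vb ω else vs ω) ∂μ
        = exp (-(b * p)) * ((1 - exp (-(s * p))) * (p + 1 / b)
            + exp (-(s * p)) * (p + 1 / s))
          + (1 - exp (-(b * p))) * (1 / s)) ∧
      ∫ ω, max (vs ω) (vb ω) ∂μ = 1 / s + 1 / b - 1 / (s + b) := by
  haveI hPs : IsProbabilityMeasure (expMeasure s) := isProbabilityMeasure_expMeasure hs
  haveI hPb : IsProbabilityMeasure (expMeasure b) := isProbabilityMeasure_expMeasure hb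
  have hmap : μ.map (fun ω => (vs ω, vb ω)) = (expMeasure s).prod (expMeasure b) := by
    rw [← hs_dist, ← hb_dist]
    exact (indepFun_iff_map_prod_eq_prod_map_map hmeas_s.aemeasurable
      hmeas_b.aemeasurable).mp hindep
  have htrans : ∀ g : ℝ × ℝ → ℝ, Measurable g →
      ∫ ω, g (vs ω, vb ω) ∂μ = ∫ z, g z ∂((expMeasure s).prod (expMeasure b)) := by
    intro g hg
    rw [← hmap, integral_map (hmeas_s.prodMk hmeas_b).aemeasurable hg.aestronglyMeasurable]
  have hid_s : Integrable (fun x : ℝ => x) (expMeasure s) := by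
    rw [← hs_dist]
    exact (integrable_map_measure aestronglyMeasurable_id hmeas_s.aemeasurable).mpr hs_int
  have hid_b : Integrable (fun x : ℝ => x) (expMeasure b) := by
    rw [← hb_dist]
    exact (integrable_map_measure aestronglyMeasurable_id hmeas_b.aemeasurable).mpr hb_int
  constructor
  · intro p hp
    have mW : Measurable fun z : ℝ × ℝ => if z.1 ≤ p ∧ p ≤ z.2 then z.2 else z.1 := by
      refine Measurable.ite ?_ measurable_snd measurable_fst
      rw [show {z : ℝ × ℝ | z.1 ≤ p ∧ p ≤ z.2}
          = {z : ℝ × ℝ | z.1 ≤ p} ∩ {z : ℝ × ℝ | p ≤ z.2} from rfl]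
      exact (measurableSet_le measurable_fst measurable_const).inter
        (measurableSet_le measurable_const measurable_snd)
    rw [htrans _ mW]
    have hdec : (fun z : ℝ × ℝ => if z.1 ≤ p ∧ p ≤ z.2 then z.2 else z.1)
        = fun z : ℝ × ℝ => z.1 * 1 + ((if z.1 ≤ p then (1:ℝ) else 0) * (if p ≤ z.2 then z.2 else 0)
          + (-(if z.1 ≤ p then z.1 else 0)) * (if p ≤ z.2 then (1:ℝ) else 0)) := by
      funext z
      by_cases h1 : z.1 ≤ p <;> by_cases h2 : p ≤ z.2 <;> simp [h1, h2]
    have mf1 : Measurable fun x : ℝ => if x ≤ p then (1:ℝ) else 0 :=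
      Measurable.ite (measurableSet_le measurable_id measurable_const) measurable_const
        measurable_const
    have mf2 : Measurable fun x : ℝ => if x ≤ p then x else 0 :=
      Measurable.ite (measurableSet_le measurable_id measurable_const) measurable_id
        measurable_const
    have mg1 : Measurable fun y : ℝ => if p ≤ y then y else 0 :=
      Measurable.ite (measurableSet_le measurable_const measurable_id) measurable_id
        measurable_const
    have mg2 : Measurable fun y : ℝ => if p ≤ y then (1:ℝ) else 0 :=
      Measurable.ite (measurableSet_le measurable_const measurable_id) measurable_const
        measurable_const
    have if1 : Integrable (fun x : ℝ => if x ≤ p then (1:ℝ) else 0) (expMeasure s) := by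
      refine (integrable_const (1:ℝ)).mono' mf1.aestronglyMeasurable (ae_of_all _ fun x => ?_)
      by_cases h : x ≤ p <;> simp [h]
    have ig2 : Integrable (fun y : ℝ => if p ≤ y then (1:ℝ) else 0) (expMeasure b) := by
      refine (integrable_const (1:ℝ)).mono' mg2.aestronglyMeasurable (ae_of_all _ fun y => ?_)
      by_cases h : p ≤ y <;> simp [h]
    have if2 : Integrable (fun x : ℝ => if x ≤ p then x else 0) (expMeasure s) := by
      refine hid_s.norm.mono' mf2.aestronglyMeasurable (ae_of_all _ fun x => ?_)
      by_cases h : x ≤ p <;> simp [h]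
    have ig1 : Integrable (fun y : ℝ => if p ≤ y then y else 0) (expMeasure b) := by
      refine hid_b.norm.mono' mg1.aestronglyMeasurable (ae_of_all _ fun y => ?_)
      by_cases h : p ≤ y <;> simp [h]
    have I1 : Integrable (fun z : ℝ × ℝ => z.1 * 1) ((expMeasure s).prod (expMeasure b)) :=
      hid_s.mul_prod (integrable_const 1)
    have I2 : Integrable (fun z : ℝ × ℝ =>
        (if z.1 ≤ p then (1:ℝ) else 0) * (if p ≤ z.2 then z.2 else 0))
        ((expMeasure s).prod (expMeasure b)) := if1.mul_prod ig1
    have I3 : Integrable (fun z : ℝ × ℝ =>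
        (-(if z.1 ≤ p then z.1 else 0)) * (if p ≤ z.2 then (1:ℝ) else 0))
        ((expMeasure s).prod (expMeasure b)) := if2.neg.mul_prod ig2
    have I23 : Integrable (fun z : ℝ × ℝ =>
        (if z.1 ≤ p then (1:ℝ) else 0) * (if p ≤ z.2 then z.2 else 0)
          + (-(if z.1 ≤ p then z.1 else 0)) * (if p ≤ z.2 then (1:ℝ) else 0))
        ((expMeasure s).prod (expMeasure b)) := I2.add I3
    have E1 := integral_prod_mul (μ := expMeasure s) (ν := expMeasure b)
      (fun x : ℝ => x) (fun _ : ℝ => (1:ℝ))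
    have E2 := integral_prod_mul (μ := expMeasure s) (ν := expMeasure b)
      (fun x : ℝ => if x ≤ p then (1:ℝ) else 0) (fun y : ℝ => if p ≤ y then y else 0)
    have E3 := integral_prod_mul (μ := expMeasure s) (ν := expMeasure b)
      (fun x : ℝ => -(if x ≤ p then x else 0)) (fun y : ℝ => if p ≤ y then (1:ℝ) else 0)
    rw [hdec, integral_add I1 I23, integral_add I2 I3, E1, E2, E3,
      integral_neg, P5 hs, P1 hs hp, P4 hb hp, P2 hs hp, P3 hb hp]
    simp only [integral_const, measure_univ, ENNReal.toReal_one, probReal_univ, smul_eq_mul, one_mul, mul_one]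
    ring
  · rw [htrans _ (measurable_fst.max measurable_snd)]
    have hint : Integrable (fun z : ℝ × ℝ => max z.1 z.2)
        ((expMeasure s).prod (expMeasure b)) := by
      refine Integrable.mono' ((hid_s.norm.mul_prod (integrable_const 1)).add
        ((integrable_const 1).mul_prod hid_b.norm))
        (measurable_fst.max measurable_snd).aestronglyMeasurable (ae_of_all _ fun z => ?_)
      simp only [Real.norm_eq_abs, mul_one, one_mul, Pi.add_apply]
      rcases le_total z.1 z.2 with h | h
      · rw [max_eq_right h]
        exact le_add_of_nonneg_left (abs_nonneg _)
      · rw [max_eq_left h]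
        exact le_add_of_nonneg_right (abs_nonneg _)
    rw [integral_prod _ hint, integral_expMeasure hs,
      setIntegral_congr_fun measurableSet_Ioi
        (fun x hx => by rw [integral_max hb hx.out] :
          EqOn _ (fun x => (x + exp (-(b * x)) / b) * (s * exp (-(s * x)))) _)]
    have hexp : ∀ x : ℝ, (x + exp (-(b * x)) / b) * (s * exp (-(s * x)))
        = x * (s * exp (-(s * x))) + (s / (b * (s + b))) * ((s + b) * exp (-((s + b) * x))) := by
      intro x
      have h : exp (-((s + b) * x)) = exp (-(b * x)) * exp (-(s * x)) := by
        rw [← Real.exp_add]; ring_nf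
      rw [h]
      field_simp
    simp_rw [hexp]
    have hsb : (0:ℝ) < s + b := by positivity
    rw [integral_add (integrableOn_moment hs le_rfl)
        ((integrableOn_tail hsb 0).const_mul _),
      integral_const_mul, integral_moment hs le_rfl, integral_tail hsb 0]
    simp only [mul_zero, neg_zero, Real.exp_zero, one_mul, zero_add, mul_one]
    field_simp
    ring
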